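/- Let F be a regular family of finite subsets of ℕ, let k, m ∈ ℕ, a_1 < a_2 < ⋯ < a_k in ℕ, and B_1 < B_2 < ⋯ < B_m finite subsets of ℕ, such that {a_1, …, a_k} ∩ (B_1 ∪ ⋯ ∪ B_m) = ∅ and {a_1, …, a_k} ∪ {min B_j : j = 1, …, m} ∈ (F)^s for some s ∈ ℕ. Set a_0 = 0 and a_{k+1} = ∞. Then the family D = ({(a_i, a_{i+1}) ∩ B_j : 0 ≤ i ≤ k, 1 ≤ j ≤ m} \ {∅}) ∪ {{a_i} : 1 ≤ i ≤ k} can be ordered into D_1 < D_2 < ⋯ < D_ℓ with ℓ ≤ m + 2k and {min D_j : j = 1, …, ℓ} ∈ (F[A_2])^s. -/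

import Mathlib

noncomputable section

open scoped Classical

/-- `A < B` for finite sets of naturals: every element of `A` is smaller than every
element of `B` (i.e. `max A < min B`, with the conventions `∅ < B` and `A < ∅`). -/
def finLT (A B : Finset ℕ) : Prop := ∀ a ∈ A, ∀ b ∈ B, a < b

/-- The minimum of a finite set of naturals (`0` if the set is empty; it is only ever
used for nonempty sets). -/
def sMin (A : Finset ℕ) : ℕ := sInf (A : Set ℕ)

/-- The composition `M[N]` of two families of finite subsets of `ℕ`:
all unions `F_1 ∪ ⋯ ∪ F_k` with `F_i ∈ N` nonempty, `F_1 < F_2 < ⋯ < F_k` and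
`{min F_i : i = 1, …, k} ∈ M`. -/
def famComp (M N : Set (Finset ℕ)) : Set (Finset ℕ) :=
  {A | ∃ (k : ℕ) (F : Fin k → Finset ℕ),
        (∀ i, F i ∈ N) ∧ (∀ i, (F i).Nonempty) ∧
        (∀ i j : Fin k, i < j → finLT (F i) (F j)) ∧
        (Finset.univ.image fun i => sMin (F i)) ∈ M ∧
        A = Finset.univ.biUnion F}

/-- `B` is a spread of `A`: there is an injection `f` of `A` onto `B` with `a ≤ f a`
for all `a ∈ A` (equivalently, writing `A = {a_1 < ⋯ < a_n}` and
`B = {b_1 < ⋯ < b_n}`, one has `a_i ≤ b_i` for all `i`). -/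
def IsSpread (A B : Finset ℕ) : Prop :=
  ∃ f : ℕ → ℕ, Set.InjOn f A ∧ (∀ a ∈ A, a ≤ f a) ∧ B = A.image f

/-- A family of finite subsets of `ℕ` is regular if it is hereditary, spreading, and
compact as a subset of `{0,1}^ℕ` (with the product of discrete topologies). -/
def IsRegularFam (F : Set (Finset ℕ)) : Prop :=
  (∀ A ∈ F, ∀ B ⊆ A, B ∈ F) ∧
  (∀ A ∈ F, ∀ B : Finset ℕ, IsSpread A B → B ∈ F) ∧
  IsCompact ((fun A : Finset ℕ => fun n : ℕ => decide (n ∈ A)) '' F : Set (ℕ → Bool))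

/-- `A_n = {E ⊆ ℕ : |E| ≤ n}`. -/
def Acard (n : ℕ) : Set (Finset ℕ) := {E : Finset ℕ | E.card ≤ n}

/-- `(F)^s = {M₁ ∪ ⋯ ∪ M_s : M₁ < ⋯ < M_s, each Mᵢ ∈ F}`. -/
def powF (F : Set (Finset ℕ)) (s : ℕ) : Set (Finset ℕ) :=
  {A | ∃ M : Fin s → Finset ℕ, (∀ i, M i ∈ F) ∧
        (∀ i j : Fin s, i < j → finLT (M i) (M j)) ∧ A = Finset.univ.biUnion M}

/-- `x` lies in the open interval `(a_i, a_{i+1})`, for `0 ≤ i ≤ k`, where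
`a_1 < ⋯ < a_k` is given (zero-indexed as `a 0, …, a (k-1)`), `a_0 = 0` and
`a_{k+1} = ∞`. -/
def inOpenInterval (k : ℕ) (a : Fin k → ℕ) (i : ℕ) (x : ℕ) : Prop :=
  (∀ h : 1 ≤ i ∧ i ≤ k, a ⟨i - 1, by omega⟩ < x) ∧ (∀ h : i < k, x < a ⟨i, h⟩)

/-- The family `𝒟 = ({(a_i, a_{i+1}) ∩ B_j : 0 ≤ i ≤ k, 1 ≤ j ≤ m} \ {∅})
∪ {{a_i} : 1 ≤ i ≤ k}`. -/
def pieceFam (k m : ℕ) (a : Fin k → ℕ) (B : Fin m → Finset ℕ) : Set (Finset ℕ) :=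
  {X | (∃ i : ℕ, i ≤ k ∧ ∃ j : Fin m,
          X = (B j).filter (fun x => inOpenInterval k a i x) ∧ X ≠ ∅) ∨
       ∃ i : Fin k, X = ({a i} : Finset ℕ)}

lemma sMin_mem {A : Finset ℕ} (h : A.Nonempty) : sMin A ∈ A := by
  have := Nat.sInf_mem (s := (A : Set ℕ)) (by exact_mod_cast h)
  exact_mod_cast this

lemma sMin_le {A : Finset ℕ} {x : ℕ} (h : x ∈ A) : sMin A ≤ x := Nat.sInf_le h

lemma sMin_singleton (x : ℕ) : sMin {x} = x := by
  simp [sMin]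

section main
variable {k m : ℕ} {a : Fin k → ℕ} {B : Fin m → Finset ℕ}

lemma mem_int_iff (ha : StrictMono a) {i : ℕ} (hik : i ≤ k) {y : ℕ}
    (hy : inOpenInterval k a i y) (t : Fin k) : a t < y ↔ (t : ℕ) < i := by
  constructor
  · intro h
    by_contra hlt
    push_neg at hlt
    have hik2 : i < k := lt_of_le_of_lt (by omega) t.isLt
    have := hy.2 hik2
    have : a t < a ⟨i, hik2⟩ := lt_trans h this
    have := ha.lt_iff_lt.mp this
    simp [Fin.lt_def] at this
    omega
  · intro h
    have h1 : 1 ≤ i ∧ i ≤ k := ⟨by omega, hik⟩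
    have := hy.1 h1
    calc a t ≤ a ⟨i - 1, by omega⟩ := ha.monotone (by simp [Fin.le_def]; omega)
    _ < y := this

lemma int_disj (ha : StrictMono a) {i i' : ℕ} (hik : i ≤ k) (hik' : i' ≤ k) {x : ℕ}
    (hx : inOpenInterval k a i x) (hx' : inOpenInterval k a i' x) : i = i' := by
  rcases lt_trichotomy i i' with h | h | h
  · exfalso
    have hk : i' - 1 < k := by omega
    have h1 : a ⟨i' - 1, hk⟩ < x := hx'.1 ⟨by omega, hik'⟩
    have h2 := (mem_int_iff ha hik hx ⟨i' - 1, hk⟩).mp h1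
    simp at h2; omega
  · exact h
  · exfalso
    have hk : i - 1 < k := by omega
    have h1 : a ⟨i - 1, hk⟩ < x := hx.1 ⟨by omega, hik⟩
    have h2 := (mem_int_iff ha hik' hx' ⟨i - 1, hk⟩).mp h1
    simp at h2; omega

lemma int_lt (ha : StrictMono a) {i i' : ℕ} (hik : i ≤ k) (hik' : i' < i) {x y : ℕ}
    (hx : inOpenInterval k a i x) (hy : inOpenInterval k a i' y) : y < x := by
  have hk : i - 1 < k := by omega
  have h1 : ¬ a ⟨i - 1, hk⟩ < y := by
    intro h
    have := (mem_int_iff ha (by omega) hy ⟨i - 1, hk⟩).mp h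
    simp at this; omega
  have h2 : a ⟨i - 1, hk⟩ < x := hx.1 ⟨by omega, hik⟩
  omega

lemma int_exists (ha : StrictMono a) {x : ℕ} (hx : ∀ t : Fin k, a t ≠ x) :
    ∃ i ≤ k, inOpenInterval k a i x := by
  set Q := Finset.univ.filter (fun t : Fin k => a t < x) with hQ
  by_cases hne : Q.Nonempty
  · obtain ⟨t₀, ht₀, hmax⟩ := Q.exists_max_image id hne
    refine ⟨(t₀ : ℕ) + 1, by omega, ?_, ?_⟩
    · intro h
      have h2 : a t₀ < x := by simpa [hQ] using (Finset.mem_filter.mp ht₀).2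
      convert h2 using 2
      exact Fin.ext (by simp)
    · intro h
      by_contra hle
      push_neg at hle
      have hlt : a ⟨(t₀ : ℕ) + 1, h⟩ < x :=
        lt_of_le_of_ne hle (hx _)
      have hmem : (⟨(t₀ : ℕ) + 1, h⟩ : Fin k) ∈ Q := by
        simp [hQ, hlt]
      have := hmax _ hmem
      simp [id, Fin.le_def] at this
  · refine ⟨0, by omega, fun h => by omega, fun h => ?_⟩
    by_contra hle
    push_neg at hle
    have hlt : a ⟨0, h⟩ < x := lt_of_le_of_ne hle (hx _)
    exact hne ⟨⟨0, h⟩, by simp [hQ, hlt]⟩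

lemma pf_nonempty {X : Finset ℕ} (hX : X ∈ pieceFam k m a B) : X.Nonempty := by
  rcases hX with ⟨i, hik, j, hXe, hne⟩ | ⟨i, hXe⟩
  · rw [hXe]; exact Finset.nonempty_iff_ne_empty.mpr (hXe ▸ hne)
  · rw [hXe]; exact Finset.singleton_nonempty _

lemma finLT_of_min_lt (ha : StrictMono a)
    (hBne : ∀ j, (B j).Nonempty) (hBlt : ∀ i j : Fin m, i < j → finLT (B i) (B j))
    (hdisj : ∀ (i : Fin k) (j : Fin m), a i ∉ B j)
    {X Y : Finset ℕ} (hX : X ∈ pieceFam k m a B) (hY : Y ∈ pieceFam k m a B)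
    (h : sMin X < sMin Y) : finLT X Y := by
  have hXne := pf_nonempty hX
  have hYne := pf_nonempty hY
  rcases hX with ⟨i, hik, j, hXe, -⟩ | ⟨i, hXe⟩ <;>
    rcases hY with ⟨i', hik', j', hYe, -⟩ | ⟨i', hYe⟩
  · -- piece vs piece
    have hXsub : ∀ x ∈ X, x ∈ B j ∧ inOpenInterval k a i x := by
      intro x hx; rw [hXe] at hx; exact Finset.mem_filter.mp hx
    have hYsub : ∀ y ∈ Y, y ∈ B j' ∧ inOpenInterval k a i' y := by
      intro y hy; rw [hYe] at hy; exact Finset.mem_filter.mp hy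
    rcases lt_trichotomy j j' with hj | hj | hj
    · intro x hx y hy
      exact hBlt j j' hj x (hXsub x hx).1 y (hYsub y hy).1
    · subst hj
      rcases lt_trichotomy i i' with hi | hi | hi
      · intro x hx y hy
        exact int_lt ha hik' hi (hYsub y hy).2 (hXsub x hx).2
      · exfalso; rw [hXe, hYe, hi] at h; omega
      · exfalso
        have := int_lt ha hik hi (hXsub _ (sMin_mem hXne)).2 (hYsub _ (sMin_mem hYne)).2
        omega
    · exfalso
      have := hBlt j' j hj _ (hYsub _ (sMin_mem hYne)).1 _ (hXsub _ (sMin_mem hXne)).1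
      omega
  · -- piece vs singleton {a i'}
    have hmY : sMin Y = a i' := by rw [hYe]; exact sMin_singleton _
    intro x hx y hy
    rw [hYe, Finset.mem_singleton] at hy
    subst hy
    have hxm := Finset.mem_filter.mp (hXe ▸ hx)
    have hne : x ≠ a i' := fun he => hdisj i' j (he ▸ hxm.1)
    rcases lt_or_ge x (a i') with h1 | h1
    · exact h1
    exfalso
    have h2 : a i' < x ∨ a i' = x := by omega
    rcases h2 with h2 | h2
    · have h3 := (mem_int_iff ha hik hxm.2 i').mp h2
      have hms := Finset.mem_filter.mp (hXe ▸ sMin_mem hXne)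
      have h4 := (mem_int_iff ha hik hms.2 i').mpr h3
      rw [← hXe] at h4
      omega
    · exact hne h2.symm
  · -- singleton {a i} vs piece
    have hmX : sMin X = a i := by rw [hXe]; exact sMin_singleton _
    intro x hx y hy
    rw [hXe, Finset.mem_singleton] at hx
    subst hx
    have hym := Finset.mem_filter.mp (hYe ▸ hy)
    have hms := Finset.mem_filter.mp (hYe ▸ sMin_mem hYne)
    have h' : a i < sMin Y := hmX ▸ h
    rw [hYe] at h'
    have h3 := (mem_int_iff ha hik' hms.2 i).mp h'
    exact (mem_int_iff ha hik' hym.2 i).mpr h3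
  · intro x hx y hy
    rw [hXe, Finset.mem_singleton] at hx
    rw [hYe, Finset.mem_singleton] at hy
    subst hx; subst hy
    have : sMin X = a i := by rw [hXe]; exact sMin_singleton _
    have : sMin Y = a i' := by rw [hYe]; exact sMin_singleton _
    omega

lemma eq_of_sMin_eq (ha : StrictMono a)
    (hBne : ∀ j, (B j).Nonempty) (hBlt : ∀ i j : Fin m, i < j → finLT (B i) (B j))
    (hdisj : ∀ (i : Fin k) (j : Fin m), a i ∉ B j)
    {X Y : Finset ℕ} (hX : X ∈ pieceFam k m a B) (hY : Y ∈ pieceFam k m a B)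
    (h : sMin X = sMin Y) : X = Y := by
  have hXne := pf_nonempty hX
  have hYne := pf_nonempty hY
  have hz : sMin X ∈ X := sMin_mem hXne
  have hz' : sMin X ∈ Y := h ▸ sMin_mem hYne
  set z := sMin X with hzdef
  rcases hX with ⟨i, hik, j, hXe, -⟩ | ⟨i, hXe⟩ <;>
    rcases hY with ⟨i', hik', j', hYe, -⟩ | ⟨i', hYe⟩
  · have h1 := Finset.mem_filter.mp (hXe ▸ hz)
    have h2 := Finset.mem_filter.mp (hYe ▸ hz')
    have hj : j = j' := by
      by_contra hne
      rcases Ne.lt_or_gt hne with hj | hj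
      · exact absurd (hBlt j j' hj z h1.1 z h2.1) (lt_irrefl z)
      · exact absurd (hBlt j' j hj z h2.1 z h1.1) (lt_irrefl z)
    have hi : i = i' := int_disj ha hik hik' h1.2 h2.2
    rw [hXe, hYe, hi, hj]
  · exfalso
    have h1 := Finset.mem_filter.mp (hXe ▸ hz)
    rw [hYe, Finset.mem_singleton] at hz'
    exact hdisj i' j (hz' ▸ h1.1)
  · exfalso
    have h2 := Finset.mem_filter.mp (hYe ▸ hz')
    rw [hXe, Finset.mem_singleton] at hz
    exact hdisj i j' (hz ▸ h2.1)
  · rw [hXe, Finset.mem_singleton] at hz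
    rw [hYe, Finset.mem_singleton] at hz'
    rw [hXe, hYe, ha.injective (hz.symm.trans hz')]

def Sset (k m : ℕ) (a : Fin k → ℕ) (B : Fin m → Finset ℕ) : Finset ℕ :=
  Finset.univ.image a ∪ Finset.univ.image fun j => sMin (B j)

def gfun (k m : ℕ) (a : Fin k → ℕ) (B : Fin m → Finset ℕ) (y : ℕ) : ℕ :=
  sSup {x : ℕ | x ∈ Sset k m a B ∧ x ≤ y}

lemma g_spec (hy : ∃ x ∈ Sset k m a B, x ≤ y) :
    gfun k m a B y ∈ Sset k m a B ∧ gfun k m a B y ≤ y ∧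
      ∀ x ∈ Sset k m a B, x ≤ y → x ≤ gfun k m a B y := by
  obtain ⟨x0, hx0, hx0y⟩ := hy
  have hne : {x : ℕ | x ∈ Sset k m a B ∧ x ≤ y}.Nonempty := ⟨x0, hx0, hx0y⟩
  have hbdd : BddAbove {x : ℕ | x ∈ Sset k m a B ∧ x ≤ y} := ⟨y, fun z hz => hz.2⟩
  have hmem := Nat.sSup_mem hne hbdd
  exact ⟨hmem.1, hmem.2, fun x hx hxy => le_csSup hbdd ⟨hx, hxy⟩⟩

lemma g_lt {y y' : ℕ} (hy : ∃ x ∈ Sset k m a B, x ≤ y) (hy' : ∃ x ∈ Sset k m a B, x ≤ y')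
    (h : gfun k m a B y < gfun k m a B y') : y < y' := by
  have hs := g_spec hy
  have hs' := g_spec hy'
  by_contra hle
  push_neg at hle
  have : gfun k m a B y' ≤ gfun k m a B y := hs.2.2 _ hs'.1 (le_trans hs'.2.1 hle)
  omega

lemma g_id {x : ℕ} (hx : x ∈ Sset k m a B) : gfun k m a B x = x := by
  have hs := g_spec ⟨x, hx, le_refl x⟩
  exact le_antisymm hs.2.1 (hs.2.2 x hx (le_refl x))

lemma pf_lb {X : Finset ℕ} (hX : X ∈ pieceFam k m a B) :
    ∃ x ∈ Sset k m a B, x ≤ sMin X := by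
  rcases hX with ⟨i, hik, j, hXe, hne⟩ | ⟨i, hXe⟩
  · refine ⟨sMin (B j), Finset.mem_union_right _ (Finset.mem_image_of_mem _ (Finset.mem_univ j)), ?_⟩
    have hXne : X.Nonempty := Finset.nonempty_iff_ne_empty.mpr (hXe ▸ hne)
    have : sMin X ∈ B j := by
      have := sMin_mem hXne
      rw [hXe] at this
      rw [hXe]
      exact (Finset.mem_filter.mp this).1
    exact sMin_le this
  · refine ⟨a i, Finset.mem_union_left _ (Finset.mem_image_of_mem _ (Finset.mem_univ i)), ?_⟩
    rw [hXe, sMin_singleton]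

/-- If the minimum of a nonempty piece is not the minimum of its `B j`, then there is
`t : Fin k` with `t + 1 = i`, `sMin (B j) < a t < sMin X`, and `g (sMin X) = a t`. -/
lemma extra_main (ha : StrictMono a)
    (hBne : ∀ j, (B j).Nonempty) (hBlt : ∀ i j : Fin m, i < j → finLT (B i) (B j))
    (hdisj : ∀ (i : Fin k) (j : Fin m), a i ∉ B j)
    {i : ℕ} {j : Fin m} (hik : i ≤ k)
    (hne : (B j).filter (fun x => inOpenInterval k a i x) ≠ ∅)
    (hm : sMin ((B j).filter (fun x => inOpenInterval k a i x)) ≠ sMin (B j)) :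
    ∃ t : Fin k, (t : ℕ) + 1 = i ∧ sMin (B j) < a t ∧
      a t < sMin ((B j).filter (fun x => inOpenInterval k a i x)) ∧
      gfun k m a B (sMin ((B j).filter (fun x => inOpenInterval k a i x))) = a t := by
  set X := (B j).filter (fun x => inOpenInterval k a i x) with hXdef
  have hXne : X.Nonempty := Finset.nonempty_iff_ne_empty.mpr hne
  set z := sMin X with hz
  have hzX : z ∈ X := sMin_mem hXne
  have hzB : z ∈ B j := (Finset.mem_filter.mp hzX).1
  have hzI : inOpenInterval k a i z := (Finset.mem_filter.mp hzX).2
  set b := sMin (B j) with hb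
  have hbB : b ∈ B j := sMin_mem (hBne j)
  have hbz : b < z := lt_of_le_of_ne (sMin_le hzB) (Ne.symm hm)
  obtain ⟨i0, hi0k, hi0⟩ := int_exists ha (x := b) (fun t ht => hdisj t j (ht ▸ hbB))
  have hi0i : i0 ≠ i := by
    intro hcon
    subst hcon
    have : b ∈ X := Finset.mem_filter.mpr ⟨hbB, hi0⟩
    have := sMin_le this
    omega
  have hi0lt : i0 < i := by
    rcases lt_or_gt_of_ne hi0i with h | h
    · exact h
    · exfalso; have := int_lt ha hi0k h hi0 hzI; omega
  have h1i : 1 ≤ i := by omega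
  have htk : i - 1 < k := by omega
  set t : Fin k := ⟨i - 1, htk⟩ with ht
  have hti : (t : ℕ) + 1 = i := by simp [ht]; omega
  have hatz : a t < z := hzI.1 ⟨h1i, hik⟩
  have hbat : b < a t := by
    have h1 : ¬ a t < b := by
      intro h
      have := (mem_int_iff ha hi0k hi0 t).mp h
      simp [ht] at this
      omega
    have h2 : b ≠ a t := fun h => hdisj t j (h ▸ hbB)
    omega
  refine ⟨t, hti, hbat, hatz, ?_⟩
  have haS : a t ∈ Sset k m a B :=
    Finset.mem_union_left _ (Finset.mem_image_of_mem _ (Finset.mem_univ t))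
  have hs := g_spec (y := z) ⟨a t, haS, le_of_lt hatz⟩
  refine le_antisymm ?_ (hs.2.2 _ haS (le_of_lt hatz))
  -- every element of S that is ≤ z is ≤ a t
  have hub : ∀ x ∈ Sset k m a B, x ≤ z → x ≤ a t := by
    intro x hx hxz
    rcases Finset.mem_union.mp hx with hx | hx
    · obtain ⟨t', -, rfl⟩ := Finset.mem_image.mp hx
      have hne' : a t' ≠ z := fun h => hdisj t' j (h ▸ hzB)
      have hlt : a t' < z := lt_of_le_of_ne hxz hne'
      have := (mem_int_iff ha hik hzI t').mp hlt
      exact ha.monotone (by simp [Fin.le_def, ht]; omega)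
    · obtain ⟨j', -, rfl⟩ := Finset.mem_image.mp hx
      rcases lt_trichotomy j' j with h | h | h
      · have := hBlt j' j h _ (sMin_mem (hBne j')) _ hbB
        omega
      · subst h; omega
      · exfalso
        have := hBlt j j' h _ hzB _ (sMin_mem (hBne j'))
        omega
  exact hub _ hs.1 hs.2.1

lemma extra_inj (ha : StrictMono a)
    (hBne : ∀ j, (B j).Nonempty) (hBlt : ∀ i j : Fin m, i < j → finLT (B i) (B j))
    {i i' : ℕ} {j j' : Fin m} {t t' : Fin k}
    (h1 : (t : ℕ) + 1 = i) (h1' : (t' : ℕ) + 1 = i')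
    (h2 : sMin (B j) < a t) (h2' : sMin (B j') < a t')
    (h3 : a t < sMin ((B j).filter (fun x => inOpenInterval k a i x)))
    (h3' : a t' < sMin ((B j').filter (fun x => inOpenInterval k a i' x)))
    (hne : (B j).filter (fun x => inOpenInterval k a i x) ≠ ∅)
    (hne' : (B j').filter (fun x => inOpenInterval k a i' x) ≠ ∅)
    (heq : a t = a t') : i = i' ∧ j = j' := by
  have htt : t = t' := ha.injective heq
  subst htt
  have hii : i = i' := by omega
  refine ⟨hii, ?_⟩
  by_contra hjj
  have hXB : sMin ((B j).filter (fun x => inOpenInterval k a i x)) ∈ B j :=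
    (Finset.mem_filter.mp (sMin_mem (Finset.nonempty_iff_ne_empty.mpr hne))).1
  have hXB' : sMin ((B j').filter (fun x => inOpenInterval k a i' x)) ∈ B j' :=
    (Finset.mem_filter.mp (sMin_mem (Finset.nonempty_iff_ne_empty.mpr hne'))).1
  rcases Ne.lt_or_gt hjj with h | h
  · have := hBlt j j' h _ hXB _ (sMin_mem (hBne j'))
    omega
  · have := hBlt j' j h _ hXB' _ (sMin_mem (hBne j))
    omega

def Pfin (k m : ℕ) (a : Fin k → ℕ) (B : Fin m → Finset ℕ) : Finset (Finset ℕ) :=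
  ((Finset.range (k+1) ×ˢ (Finset.univ : Finset (Fin m))).image
      (fun p => (B p.2).filter (fun x => inOpenInterval k a p.1 x))).filter (fun X => X ≠ ∅)

def Dfin (k m : ℕ) (a : Fin k → ℕ) (B : Fin m → Finset ℕ) : Finset (Finset ℕ) :=
  Pfin k m a B ∪ (Finset.univ : Finset (Fin k)).image (fun i => ({a i} : Finset ℕ))

lemma mem_Pfin {X : Finset ℕ} : X ∈ Pfin k m a B ↔
    ∃ i : ℕ, i ≤ k ∧ ∃ j : Fin m,
      X = (B j).filter (fun x => inOpenInterval k a i x) ∧ X ≠ ∅ := by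
  constructor
  · intro h
    obtain ⟨hX, hne⟩ := Finset.mem_filter.mp h
    obtain ⟨p, hp, hpe⟩ := Finset.mem_image.mp hX
    obtain ⟨hp1, -⟩ := Finset.mem_product.mp hp
    have := Finset.mem_range.mp hp1
    exact ⟨p.1, by omega, p.2, hpe.symm, hne⟩
  · rintro ⟨i, hik, j, hXe, hne⟩
    refine Finset.mem_filter.mpr ⟨Finset.mem_image.mpr ⟨(i, j), ?_, hXe.symm⟩, hne⟩
    exact Finset.mem_product.mpr ⟨Finset.mem_range.mpr (by omega), Finset.mem_univ _⟩

lemma mem_Dfin {X : Finset ℕ} : X ∈ Dfin k m a B ↔ X ∈ pieceFam k m a B := by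
  constructor
  · intro h
    rcases Finset.mem_union.mp h with h | h
    · exact Or.inl (mem_Pfin.mp h)
    · obtain ⟨i, -, he⟩ := Finset.mem_image.mp h
      exact Or.inr ⟨i, he.symm⟩
  · intro h
    rcases h with h | ⟨i, hXe⟩
    · exact Finset.mem_union_left _ (mem_Pfin.mpr h)
    · exact Finset.mem_union_right _ (Finset.mem_image.mpr ⟨i, Finset.mem_univ _, hXe.symm⟩)

lemma S_sub_T (ha : StrictMono a) (hBne : ∀ j, (B j).Nonempty)
    (hdisj : ∀ (i : Fin k) (j : Fin m), a i ∉ B j) :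
    Sset k m a B ⊆ (Dfin k m a B).image sMin := by
  intro x hx
  rcases Finset.mem_union.mp hx with hx | hx
  · obtain ⟨i, -, rfl⟩ := Finset.mem_image.mp hx
    refine Finset.mem_image.mpr ⟨{a i}, mem_Dfin.mpr (Or.inr ⟨i, rfl⟩), sMin_singleton _⟩
  · obtain ⟨j, -, rfl⟩ := Finset.mem_image.mp hx
    have hbB : sMin (B j) ∈ B j := sMin_mem (hBne j)
    obtain ⟨i0, hi0k, hi0⟩ := int_exists ha (x := sMin (B j))
      (fun t ht => hdisj t j (ht ▸ hbB))
    set X := (B j).filter (fun x => inOpenInterval k a i0 x) with hXdef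
    have hmem : sMin (B j) ∈ X := Finset.mem_filter.mpr ⟨hbB, hi0⟩
    have hne : X ≠ ∅ := Finset.nonempty_iff_ne_empty.mp ⟨_, hmem⟩
    refine Finset.mem_image.mpr ⟨X, mem_Dfin.mpr (Or.inl ⟨i0, hi0k, j, rfl, hne⟩), ?_⟩
    refine le_antisymm (sMin_le hmem) ?_
    exact sMin_le ((Finset.mem_filter.mp (sMin_mem ⟨_, hmem⟩)).1)

lemma block_card (ha : StrictMono a)
    (hBne : ∀ j, (B j).Nonempty) (hBlt : ∀ i j : Fin m, i < j → finLT (B i) (B j))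
    (hdisj : ∀ (i : Fin k) (j : Fin m), a i ∉ B j) (x : ℕ) :
    ((((Dfin k m a B).image sMin).filter (fun y => gfun k m a B y = x))).card ≤ 2 := by
  classical
  set T := (Dfin k m a B).image sMin with hT
  set Ebad := T.filter (fun y => gfun k m a B y = x ∧ y ∉ Sset k m a B) with hE
  have hkey : ∀ y ∈ Ebad, ∃ (i : ℕ) (j : Fin m) (t : Fin k),
      i ≤ k ∧ (B j).filter (fun z => inOpenInterval k a i z) ≠ ∅ ∧
      y = sMin ((B j).filter (fun z => inOpenInterval k a i z)) ∧
      (t : ℕ) + 1 = i ∧ sMin (B j) < a t ∧ a t < y ∧ a t = x := by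
    intro y hy
    obtain ⟨hyT, hgy, hyS⟩ := Finset.mem_filter.mp hy
    obtain ⟨X, hXD, hXm⟩ := Finset.mem_image.mp hyT
    rcases mem_Dfin.mp hXD with ⟨i, hik, j, hXe, hne⟩ | ⟨i, hXe⟩
    · subst hXe
      by_cases hfirst : sMin ((B j).filter (fun z => inOpenInterval k a i z)) = sMin (B j)
      · exfalso
        apply hyS
        rw [← hXm, hfirst]
        exact Finset.mem_union_right _ (Finset.mem_image_of_mem _ (Finset.mem_univ j))
      · obtain ⟨t, ht1, ht2, ht3, ht4⟩ := extra_main ha hBne hBlt hdisj hik hne hfirst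
        refine ⟨i, j, t, hik, hne, hXm.symm, ht1, ht2, hXm ▸ ht3, ?_⟩
        rw [← hgy, ← hXm, ht4]
    · exfalso
      apply hyS
      rw [← hXm, hXe, sMin_singleton]
      exact Finset.mem_union_left _ (Finset.mem_image_of_mem _ (Finset.mem_univ i))
  have hE1 : Ebad.card ≤ 1 := by
    refine Finset.card_le_one.mpr (fun y hy y' hy' => ?_)
    obtain ⟨i, j, t, hik, hne, hym, ht1, ht2, ht3, ht4⟩ := hkey y hy
    obtain ⟨i', j', t', hik', hne', hym', ht1', ht2', ht3', ht4'⟩ := hkey y' hy'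
    have heq : a t = a t' := by rw [ht4, ht4']
    obtain ⟨hii, hjj⟩ := extra_inj ha hBne hBlt ht1 ht1' ht2 ht2'
      (hym ▸ ht3) (hym' ▸ ht3') hne hne' heq
    rw [hym, hym', hii, hjj]
  have hsub : T.filter (fun y => gfun k m a B y = x) ⊆ insert x Ebad := by
    intro y hy
    obtain ⟨hyT, hgy⟩ := Finset.mem_filter.mp hy
    by_cases hyS : y ∈ Sset k m a B
    · have hyx : y = x := by rw [← hgy, g_id hyS]
      rw [hyx]
      exact Finset.mem_insert_self x Ebad
    · exact Finset.mem_insert_of_mem (Finset.mem_filter.mpr ⟨hyT, hgy, hyS⟩)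
  calc (T.filter (fun y => gfun k m a B y = x)).card ≤ (insert x Ebad).card :=
        Finset.card_le_card hsub
    _ ≤ Ebad.card + 1 := Finset.card_insert_le _ _
    _ ≤ 2 := by omega

lemma Dfin_card (ha : StrictMono a)
    (hBne : ∀ j, (B j).Nonempty) (hBlt : ∀ i j : Fin m, i < j → finLT (B i) (B j))
    (hdisj : ∀ (i : Fin k) (j : Fin m), a i ∉ B j) :
    (Dfin k m a B).card ≤ m + 2 * k := by
  classical
  have hSg : ((Finset.univ : Finset (Fin k)).image (fun i => ({a i} : Finset ℕ))).card ≤ k := by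
    refine le_trans (Finset.card_image_le) (by simp)
  have hSsetcard : (Sset k m a B).card ≤ k + m := by
    refine le_trans (Finset.card_union_le _ _) ?_
    have h1 : ((Finset.univ : Finset (Fin k)).image a).card ≤ k :=
      le_trans (Finset.card_image_le) (by simp)
    have h2 : ((Finset.univ : Finset (Fin m)).image (fun j => sMin (B j))).card ≤ m :=
      le_trans (Finset.card_image_le) (by simp)
    omega
  have hP : (Pfin k m a B).card ≤ k + m := by
    refine le_trans (Finset.card_le_card_of_injOn
      (f := fun X => if sMin X ∈ Finset.univ.image (fun j => sMin (B j))
        then sMin X else gfun k m a B (sMin X)) ?_ ?_) hSsetcard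
    · intro X hX
      by_cases hfirst : sMin X ∈ Finset.univ.image (fun j => sMin (B j))
      · simp only [hfirst, if_true]
        exact Finset.mem_union_right _ hfirst
      · simp only [hfirst, if_false]
        obtain ⟨i, hik, j, hXe, hne⟩ := mem_Pfin.mp hX
        subst hXe
        have hmj : sMin (Finset.filter (fun x => inOpenInterval k a i x) (B j)) ≠ sMin (B j) := by
          intro h
          exact hfirst (Finset.mem_image.mpr ⟨j, Finset.mem_univ _, h.symm⟩)
        obtain ⟨t, -, -, -, ht4⟩ := extra_main ha hBne hBlt hdisj hik hne hmj
        rw [ht4]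
        exact Finset.mem_union_left _ (Finset.mem_image_of_mem _ (Finset.mem_univ t))
    · intro X hX X' hX' hmark
      simp only at hmark
      have hXpf : X ∈ pieceFam k m a B := mem_Dfin.mp (Finset.mem_union_left _ hX)
      have hXpf' : X' ∈ pieceFam k m a B := mem_Dfin.mp (Finset.mem_union_left _ hX')
      obtain ⟨i, hik, j, hXe, hne⟩ := mem_Pfin.mp hX
      obtain ⟨i', hik', j', hXe', hne'⟩ := mem_Pfin.mp hX'
      by_cases h1 : sMin X ∈ Finset.univ.image (fun j => sMin (B j)) <;>
        by_cases h2 : sMin X' ∈ Finset.univ.image (fun j => sMin (B j))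
      · rw [if_pos h1, if_pos h2] at hmark
        exact eq_of_sMin_eq ha hBne hBlt hdisj hXpf hXpf' hmark
      · exfalso
        rw [if_pos h1, if_neg h2] at hmark
        subst hXe; subst hXe'
        have hmj' : sMin (Finset.filter (fun x => inOpenInterval k a i' x) (B j')) ≠ sMin (B j') := by
          intro h
          exact h2 (Finset.mem_image.mpr ⟨j', Finset.mem_univ _, h.symm⟩)
        obtain ⟨t', -, -, -, ht4'⟩ := extra_main ha hBne hBlt hdisj hik' hne' hmj'
        obtain ⟨j'', -, hj''⟩ := Finset.mem_image.mp h1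
        have hat : a t' = sMin (B j'') := by rw [← ht4', ← hmark, hj'']
        have : a t' ∈ B j'' := by rw [hat]; exact sMin_mem (hBne j'')
        exact hdisj t' j'' this
      · exfalso
        rw [if_neg h1, if_pos h2] at hmark
        subst hXe; subst hXe'
        have hmj : sMin (Finset.filter (fun x => inOpenInterval k a i x) (B j)) ≠ sMin (B j) := by
          intro h
          exact h1 (Finset.mem_image.mpr ⟨j, Finset.mem_univ _, h.symm⟩)
        obtain ⟨t, -, -, -, ht4⟩ := extra_main ha hBne hBlt hdisj hik hne hmj
        obtain ⟨j'', -, hj''⟩ := Finset.mem_image.mp h2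
        have hat : a t = sMin (B j'') := by rw [← ht4, hmark, hj'']
        have : a t ∈ B j'' := by rw [hat]; exact sMin_mem (hBne j'')
        exact hdisj t j'' this
      · rw [if_neg h1, if_neg h2] at hmark
        subst hXe; subst hXe'
        have hmj : sMin (Finset.filter (fun x => inOpenInterval k a i x) (B j)) ≠ sMin (B j) := by
          intro h
          exact h1 (Finset.mem_image.mpr ⟨j, Finset.mem_univ _, h.symm⟩)
        have hmj' : sMin (Finset.filter (fun x => inOpenInterval k a i' x) (B j')) ≠ sMin (B j') := by
          intro h
          exact h2 (Finset.mem_image.mpr ⟨j', Finset.mem_univ _, h.symm⟩)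
        obtain ⟨t, ht1, ht2, ht3, ht4⟩ := extra_main ha hBne hBlt hdisj hik hne hmj
        obtain ⟨t', ht1', ht2', ht3', ht4'⟩ := extra_main ha hBne hBlt hdisj hik' hne' hmj'
        rw [ht4, ht4'] at hmark
        obtain ⟨hii, hjj⟩ := extra_inj ha hBne hBlt ht1 ht1' ht2 ht2' ht3 ht3' hne hne' hmark
        rw [hii, hjj]
  calc (Dfin k m a B).card ≤ (Pfin k m a B).card +
      ((Finset.univ : Finset (Fin k)).image (fun i => ({a i} : Finset ℕ))).card :=
        Finset.card_union_le _ _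
    _ ≤ m + 2 * k := by omega

end main

/-- Let `F` be a regular family, `a_1 < ⋯ < a_k` in `ℕ` and
`B_1 < ⋯ < B_m` finite sets with `{a_1, …, a_k} ∩ ⋃ B_j = ∅` and
`{a_1, …, a_k} ∪ {min B_j : j ≤ m} ∈ (F)^s`.  Then the family `𝒟` of the nonempty
pieces `(a_i, a_{i+1}) ∩ B_j` (with `a_0 = 0`, `a_{k+1} = ∞`) together with the
singletons `{a_i}` can be ordered into `D_1 < D_2 < ⋯ < D_ℓ` with `ℓ ≤ m + 2k` and
`{min D_j : j ≤ ℓ} ∈ (F[A_2])^s`. -/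
theorem piece_ordering (F : Set (Finset ℕ)) (hF : IsRegularFam F) (k m s : ℕ)
    (a : Fin k → ℕ) (ha : StrictMono a)
    (B : Fin m → Finset ℕ) (hBne : ∀ j, (B j).Nonempty)
    (hBlt : ∀ i j : Fin m, i < j → finLT (B i) (B j))
    (hdisj : ∀ (i : Fin k) (j : Fin m), a i ∉ B j)
    (hmins : (Finset.univ.image a ∪ Finset.univ.image fun j => sMin (B j)) ∈ powF F s) :
    ∃ (ℓ : ℕ) (D : Fin ℓ → Finset ℕ), ℓ ≤ m + 2 * k ∧
      (∀ i j : Fin ℓ, i < j → finLT (D i) (D j)) ∧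
      (∀ i, D i ∈ pieceFam k m a B) ∧
      (∀ X ∈ pieceFam k m a B, ∃ i, D i = X) ∧
      (Finset.univ.image fun i => sMin (D i)) ∈ powF (famComp F (Acard 2)) s := by

  classical
  set T : Finset ℕ := (Dfin k m a B).image sMin with hTdef
  set ℓ := T.card with hl
  have hcard : T.card = ℓ := rfl
  let e : Fin ℓ ↪o ℕ := T.orderEmbOfFin hcard
  have hemem : ∀ i : Fin ℓ, e i ∈ T := fun i => T.orderEmbOfFin_mem hcard i
  have hex : ∀ i : Fin ℓ, ∃ X, X ∈ Dfin k m a B ∧ sMin X = e i :=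
    fun i => Finset.mem_image.mp (hemem i)
  set D : Fin ℓ → Finset ℕ := fun i => Classical.choose (hex i) with hDdef
  have hDspec : ∀ i, D i ∈ Dfin k m a B ∧ sMin (D i) = e i :=
    fun i => Classical.choose_spec (hex i)
  have hesurj : ∀ y ∈ T, ∃ i : Fin ℓ, e i = y := by
    intro y hy
    have := Finset.range_orderEmbOfFin T hcard
    have hy' : y ∈ Set.range (e : Fin ℓ → ℕ) := by rw [this]; exact_mod_cast hy
    exact hy'
  -- lower bounds for elements of T
  have hTlb : ∀ y ∈ T, ∃ x ∈ Sset k m a B, x ≤ y := by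
    intro y hy
    obtain ⟨X, hXD, rfl⟩ := Finset.mem_image.mp hy
    exact pf_lb (mem_Dfin.mp hXD)
  have hSsubT : Sset k m a B ⊆ T := S_sub_T ha hBne hdisj
  refine ⟨ℓ, D, ?_, ?_, ?_, ?_, ?_⟩
  · -- cardinality bound
    calc ℓ = T.card := rfl
    _ ≤ (Dfin k m a B).card := Finset.card_image_le
    _ ≤ m + 2 * k := Dfin_card ha hBne hBlt hdisj
  · -- ordering of D
    intro i j hij
    have h1 : sMin (D i) < sMin (D j) := by
      rw [(hDspec i).2, (hDspec j).2]
      exact e.strictMono hij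
    exact finLT_of_min_lt ha hBne hBlt hdisj
      (mem_Dfin.mp (hDspec i).1) (mem_Dfin.mp (hDspec j).1) h1
  · exact fun i => mem_Dfin.mp (hDspec i).1
  · -- surjectivity
    intro X hX
    have hXD : X ∈ Dfin k m a B := mem_Dfin.mpr hX
    obtain ⟨i, hi⟩ := hesurj (sMin X) (Finset.mem_image_of_mem _ hXD)
    refine ⟨i, eq_of_sMin_eq ha hBne hBlt hdisj (mem_Dfin.mp (hDspec i).1) hX ?_⟩
    rw [(hDspec i).2, hi]
  · -- the minima form a set in (F[A_2])^s
    have himg : (Finset.univ.image fun i => sMin (D i)) = T := by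
      apply Finset.ext
      intro y
      simp only [Finset.mem_image, Finset.mem_univ, true_and]
      constructor
      · rintro ⟨i, rfl⟩
        rw [(hDspec i).2]
        exact hemem i
      · intro hy
        obtain ⟨i, hi⟩ := hesurj y hy
        exact ⟨i, by rw [(hDspec i).2, hi]⟩
    rw [himg]
    obtain ⟨M, hMF, hMlt, hMu⟩ := hmins
    have hMS : ∀ t : Fin s, ∀ x ∈ M t, x ∈ Sset k m a B := by
      intro t x hx
      have : x ∈ Finset.univ.biUnion M := Finset.mem_biUnion.mpr ⟨t, Finset.mem_univ _, hx⟩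
      rw [← hMu] at this
      exact this
    refine ⟨fun t => T.filter (fun y => gfun k m a B y ∈ M t), ?_, ?_, ?_⟩
    · -- each N t belongs to famComp' F (Acard' 2)
      intro t
      set et : Fin (M t).card ↪o ℕ := (M t).orderEmbOfFin rfl with hetdef
      have hetmem : ∀ i, et i ∈ M t := fun i => (M t).orderEmbOfFin_mem rfl i
      have hetsurj : ∀ x ∈ M t, ∃ i, et i = x := by
        intro x hx
        have := Finset.range_orderEmbOfFin (M t) rfl
        have hx' : x ∈ Set.range (et : Fin (M t).card → ℕ) := by
          rw [this]; exact_mod_cast hx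
        exact hx'
      have hFiT : ∀ i, et i ∈ T.filter (fun y => gfun k m a B y = et i) := by
        intro i
        exact Finset.mem_filter.mpr ⟨hSsubT (hMS t _ (hetmem i)), g_id (hMS t _ (hetmem i))⟩
      have hFimin : ∀ i, sMin (T.filter (fun y => gfun k m a B y = et i)) = et i := by
        intro i
        refine le_antisymm (sMin_le (hFiT i)) ?_
        have hm := sMin_mem ⟨_, hFiT i⟩
        obtain ⟨hmT, hmg⟩ := Finset.mem_filter.mp hm
        exact le_of_eq_of_le hmg.symm (g_spec (hTlb _ hmT)).2.1
      refine ⟨(M t).card, fun i => T.filter (fun y => gfun k m a B y = et i),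
        ?_, ?_, ?_, ?_, ?_⟩
      · intro i
        exact block_card ha hBne hBlt hdisj (et i)
      · intro i
        exact ⟨_, hFiT i⟩
      · intro i j hij
        intro y hy y' hy'
        obtain ⟨hyT, hyg⟩ := Finset.mem_filter.mp hy
        obtain ⟨hyT', hyg'⟩ := Finset.mem_filter.mp hy'
        refine g_lt (hTlb _ hyT) (hTlb _ hyT') ?_
        rw [hyg, hyg']
        exact et.strictMono hij
      · have : (Finset.univ.image fun i => sMin (T.filter (fun y => gfun k m a B y = et i)))
            = M t := by
          apply Finset.ext
          intro x
          simp only [Finset.mem_image, Finset.mem_univ, true_and]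
          constructor
          · rintro ⟨i, rfl⟩
            rw [hFimin i]
            exact hetmem i
          · intro hx
            obtain ⟨i, hi⟩ := hetsurj x hx
            exact ⟨i, by rw [hFimin i, hi]⟩
        rw [this]
        exact hMF t
      · apply Finset.ext
        intro y
        simp only [Finset.mem_filter, Finset.mem_biUnion, Finset.mem_univ, true_and]
        constructor
        · rintro ⟨hyT, hyg⟩
          obtain ⟨i, hi⟩ := hetsurj _ hyg
          exact ⟨i, hyT, hi.symm⟩
        · rintro ⟨i, hyT, hyg⟩
          exact ⟨hyT, hyg ▸ hetmem i⟩
    · -- the N t are ordered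
      intro t t' htt y hy y' hy'
      obtain ⟨hyT, hyg⟩ := Finset.mem_filter.mp hy
      obtain ⟨hyT', hyg'⟩ := Finset.mem_filter.mp hy'
      refine g_lt (hTlb _ hyT) (hTlb _ hyT') ?_
      exact hMlt t t' htt _ hyg _ hyg'
    · -- T is the union of the N t
      apply Finset.ext
      intro y
      simp only [Finset.mem_biUnion, Finset.mem_univ, Finset.mem_filter, true_and]
      constructor
      · intro hy
        have hgS : gfun k m a B y ∈ Sset k m a B := (g_spec (hTlb _ hy)).1
        have hgS' : gfun k m a B y ∈ Finset.univ.biUnion M := by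
          rw [← hMu]; exact hgS
        obtain ⟨t, -, ht⟩ := Finset.mem_biUnion.mp hgS'
        exact ⟨t, hy, ht⟩
      · rintro ⟨t, hy, -⟩
        exact hy
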